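/- Let (X,d) be a compact metric space and f : X → X a continuous map. Then f is surjective if and only if the induced pushforward map f̂ : 𝓜(X) → 𝓜(X) is surjective. -/

import Mathlib

open MeasureTheory Filter

/-- `nacomp f n = f_{n-1} ∘ ⋯ ∘ f_0` (with `nacomp f 0 = id`): the time-`n` map of the
non-autonomous system `(X, f_{0,∞})`. -/
def nacomp {Y : Type*} (f : ℕ → Y → Y) : ℕ → Y → Y
  | 0 => id
  | n + 1 => f n ∘ nacomp f n

/-- The induced pushforward map `f̂` on the space `𝓜(X)` of Borel probability measures,
equipped with the Lévy–Prokhorov metric. -/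
noncomputable def inducedMap {X : Type*} [MetricSpace X] [MeasurableSpace X] [BorelSpace X]
    (f : X → X) (hf : Continuous f) :
    LevyProkhorov (ProbabilityMeasure X) → LevyProkhorov (ProbabilityMeasure X) :=
  fun μ => (LevyProkhorov.toMeasureEquiv (α := ProbabilityMeasure X)).symm
    (((LevyProkhorov.toMeasureEquiv (α := ProbabilityMeasure X)) μ).map hf.measurable.aemeasurable)

open MeasureTheory Filter Metric Set

section Section

variable {X : Type*} [MetricSpace X]

/-- Nested compact selection sets for a first-hit measurable section. -/
noncomputable def Kseq (f : X → X) (D : ℕ → X) : ℕ → X → Set X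
  | 0, y => f ⁻¹' {y}
  | n + 1, y => Kseq f D n y ∩
      closedBall (D (sInf {i | (Kseq f D n y ∩ closedBall (D i) ((1/2 : ℝ) ^ n)).Nonempty}))
        ((1/2 : ℝ) ^ n)

/-- The index chosen at stage `n`. -/
noncomputable def kidx (f : X → X) (D : ℕ → X) (n : ℕ) (y : X) : ℕ :=
  sInf {i | (Kseq f D n y ∩ closedBall (D i) ((1/2 : ℝ) ^ n)).Nonempty}

variable {f : X → X} {D : ℕ → X}

lemma Kseq_succ (n : ℕ) (y : X) :
    Kseq f D (n + 1) y = Kseq f D n y ∩ closedBall (D (kidx f D n y)) ((1/2 : ℝ) ^ n) := rfl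

lemma isClosed_Kseq (hf : Continuous f) (n : ℕ) (y : X) : IsClosed (Kseq f D n y) := by
  induction n with
  | zero => exact (isClosed_singleton).preimage hf
  | succ n ih => exact ih.inter isClosed_closedBall

lemma idxSet_nonempty (hD : DenseRange D) {n : ℕ} {y : X} (h : (Kseq f D n y).Nonempty) :
    {i | (Kseq f D n y ∩ closedBall (D i) ((1/2 : ℝ) ^ n)).Nonempty}.Nonempty := by
  obtain ⟨x, hx⟩ := h
  obtain ⟨i, hi⟩ := hD.exists_dist_lt x (by positivity : (0 : ℝ) < (1/2) ^ n)
  exact ⟨i, x, hx, mem_closedBall.2 hi.le⟩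

lemma nonempty_Kseq (hs : Function.Surjective f) (hD : DenseRange D) (n : ℕ) (y : X) :
    (Kseq f D n y).Nonempty := by
  induction n with
  | zero => obtain ⟨x, hx⟩ := hs y; exact ⟨x, hx⟩
  | succ n ih =>
    have := Nat.sInf_mem (idxSet_nonempty hD ih)
    exact this

lemma antitone_Kseq (y : X) : Antitone (fun n => Kseq f D n y) :=
  antitone_nat_of_succ_le fun n => inter_subset_left

/-- Key measurability induction. -/
lemma measurableSet_nonempty_inter [CompactSpace X] [MeasurableSpace X] [BorelSpace X]
    (hf : Continuous f) (hs : Function.Surjective f) (hD : DenseRange D) (n : ℕ) :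
    ∀ C : Set X, IsClosed C → MeasurableSet {y | (Kseq f D n y ∩ C).Nonempty} := by
  induction n with
  | zero =>
    intro C hC
    have : {y | (Kseq f D 0 y ∩ C).Nonempty} = f '' C := by
      ext y
      constructor
      · rintro ⟨x, hx1, hx2⟩; exact ⟨x, hx2, hx1⟩
      · rintro ⟨x, hx, rfl⟩; exact ⟨x, rfl, hx⟩
    rw [this]
    exact (hC.isCompact.image hf).isClosed.measurableSet
  | succ n ih =>
    have hidx : ∀ i : ℕ, MeasurableSet {y | kidx f D n y = i} := by
      intro i
      have : {y | kidx f D n y = i} =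
          {y | (Kseq f D n y ∩ closedBall (D i) ((1/2 : ℝ) ^ n)).Nonempty} ∩
            ⋂ j < i, {y | (Kseq f D n y ∩ closedBall (D j) ((1/2 : ℝ) ^ n)).Nonempty}ᶜ := by
        ext y
        have hne := idxSet_nonempty hD (nonempty_Kseq hs hD n y)
        simp only [mem_setOf_eq, mem_inter_iff, mem_iInter, mem_compl_iff]
        constructor
        · rintro rfl
          exact ⟨Nat.sInf_mem hne, fun j hj => Nat.notMem_of_lt_sInf hj⟩
        · rintro ⟨h1, h2⟩
          have hle : kidx f D n y ≤ i := Nat.sInf_le h1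
          rcases lt_or_eq_of_le hle with hlt | heq
          · exact absurd (Nat.sInf_mem hne) (h2 _ hlt)
          · exact heq
      rw [this]
      exact (ih _ isClosed_closedBall).inter
        (MeasurableSet.iInter fun j => MeasurableSet.iInter fun _ => (ih _ isClosed_closedBall).compl)
    intro C hC
    have : {y | (Kseq f D (n + 1) y ∩ C).Nonempty} =
        ⋃ i : ℕ, {y | kidx f D n y = i} ∩
          {y | (Kseq f D n y ∩ (closedBall (D i) ((1/2 : ℝ) ^ n) ∩ C)).Nonempty} := by
      ext y
      simp only [mem_iUnion, mem_inter_iff, mem_setOf_eq]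
      constructor
      · intro h
        refine ⟨kidx f D n y, rfl, ?_⟩
        rwa [Kseq_succ, inter_assoc] at h
      · rintro ⟨i, rfl, h⟩
        rwa [Kseq_succ, inter_assoc]
    rw [this]
    exact MeasurableSet.iUnion fun i =>
      (hidx i).inter (ih _ (isClosed_closedBall.inter hC))

lemma measurable_kidx [CompactSpace X] [MeasurableSpace X] [BorelSpace X]
    (hf : Continuous f) (hs : Function.Surjective f) (hD : DenseRange D) (n : ℕ) :
    Measurable (kidx f D n) := by
  apply measurable_to_countable'
  intro i
  have : {y | kidx f D n y = i} =
      {y | (Kseq f D n y ∩ closedBall (D i) ((1/2 : ℝ) ^ n)).Nonempty} ∩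
        ⋂ j < i, {y | (Kseq f D n y ∩ closedBall (D j) ((1/2 : ℝ) ^ n)).Nonempty}ᶜ := by
    ext y
    have hne := idxSet_nonempty hD (nonempty_Kseq hs hD n y)
    simp only [mem_setOf_eq, mem_inter_iff, mem_iInter, mem_compl_iff]
    constructor
    · rintro rfl
      exact ⟨Nat.sInf_mem hne, fun j hj => Nat.notMem_of_lt_sInf hj⟩
    · rintro ⟨h1, h2⟩
      have hle : kidx f D n y ≤ i := Nat.sInf_le h1
      rcases lt_or_eq_of_le hle with hlt | heq
      · exact absurd (Nat.sInf_mem hne) (h2 _ hlt)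
      · exact heq
  have h1 := measurableSet_nonempty_inter hf hs hD n
  have heq : kidx f D n ⁻¹' {i} = {y | kidx f D n y = i} := by
    ext y; simp [Set.mem_preimage]
  rw [heq, this]
  exact (h1 _ isClosed_closedBall).inter
    (MeasurableSet.iInter fun j => MeasurableSet.iInter fun _ => (h1 _ isClosed_closedBall).compl)

/-- A continuous surjection of a compact metric space admits a measurable section. -/
lemma exists_measurable_section {X : Type*} [MetricSpace X] [CompactSpace X]
    [MeasurableSpace X] [BorelSpace X] [Nonempty X]
    (f : X → X) (hf : Continuous f) (hs : Function.Surjective f) :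
    ∃ g : X → X, Measurable g ∧ ∀ y, f (g y) = y := by
  obtain ⟨D, hD⟩ := TopologicalSpace.exists_dense_seq X
  have hne : ∀ y : X, (⋂ n, Kseq f D n y).Nonempty := fun y =>
    IsCompact.nonempty_iInter_of_sequence_nonempty_isCompact_isClosed _
      (fun n => antitone_Kseq y (Nat.le_succ n)) (nonempty_Kseq hs hD · y)
      ((isClosed_Kseq hf 0 y).isCompact) (isClosed_Kseq hf · y)
  choose g hg using hne
  refine ⟨g, ?_, fun y => by
    have : g y ∈ Kseq f D 0 y := mem_iInter.1 (hg y) 0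
    exact this⟩
  apply measurable_of_tendsto_metrizable
    (f := fun n y => D (kidx f D n y))
    (fun n => (measurable_from_top).comp (measurable_kidx hf hs hD n))
  rw [tendsto_pi_nhds]
  intro y
  rw [tendsto_iff_dist_tendsto_zero]
  apply squeeze_zero (fun n => dist_nonneg) (g := fun n => (1/2 : ℝ) ^ n)
  · intro n
    have : g y ∈ Kseq f D (n + 1) y := mem_iInter.1 (hg y) (n + 1)
    rw [Kseq_succ] at this
    have := this.2
    rw [mem_closedBall] at this
    rwa [dist_comm]
  · exact tendsto_pow_atTop_nhds_zero_of_lt_one (by norm_num) (by norm_num)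

end Section

open MeasureTheory Filter

theorem surjective_iff_induced_surjective
    {X : Type*} [MetricSpace X] [CompactSpace X] [MeasurableSpace X] [BorelSpace X]
    (f : X → X) (hf : Continuous f) :
    Function.Surjective f ↔ Function.Surjective (inducedMap f hf) := by
  constructor
  · intro hs ν
    have hX : Nonempty X := (LevyProkhorov.toMeasureEquiv (α := ProbabilityMeasure X) ν).nonempty
    obtain ⟨g, hg, hfg⟩ := exists_measurable_section f hf hs
    set ν' := LevyProkhorov.toMeasureEquiv (α := ProbabilityMeasure X) ν with hν'
    refine ⟨(LevyProkhorov.toMeasureEquiv (α := ProbabilityMeasure X)).symm (ν'.map hg.aemeasurable), ?_⟩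
    simp only [inducedMap, Equiv.apply_symm_apply]
    rw [Equiv.symm_apply_eq]
    apply ProbabilityMeasure.toMeasure_injective
    rw [ProbabilityMeasure.toMeasure_map, ProbabilityMeasure.toMeasure_map,
      Measure.map_map hf.measurable hg]
    have : f ∘ g = id := funext fun y => hfg y
    rw [this, Measure.map_id]
  · intro hs y
    have : IsProbabilityMeasure (Measure.dirac y) := inferInstance
    set δ : ProbabilityMeasure X := ⟨Measure.dirac y, this⟩ with hδ
    obtain ⟨μ, hμ⟩ := hs ((LevyProkhorov.toMeasureEquiv (α := ProbabilityMeasure X)).symm δ)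
    have h2 : ((LevyProkhorov.toMeasureEquiv (α := ProbabilityMeasure X) μ).toMeasure).map f
        = Measure.dirac y := by
      have := congrArg (fun m =>
        ((LevyProkhorov.toMeasureEquiv (α := ProbabilityMeasure X)) m).toMeasure) hμ
      simpa [inducedMap, Equiv.apply_symm_apply, hδ,
        ProbabilityMeasure.toMeasure_map, LevyProkhorov.toMeasureEquiv] using this
    have h3 : (LevyProkhorov.toMeasureEquiv (α := ProbabilityMeasure X) μ).toMeasure (f ⁻¹' {y}) = 1 := by
      have hm : MeasurableSet ({y} : Set X) := measurableSet_singleton y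
      rw [← Measure.map_apply hf.measurable hm, h2]; exact Measure.dirac_apply_of_mem rfl
    have h4 : (f ⁻¹' {y}).Nonempty := by
      rw [Set.nonempty_iff_ne_empty]
      intro h
      rw [h] at h3
      simp at h3
    obtain ⟨x, hx⟩ := h4
    exact ⟨x, hx⟩
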